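/- Let $\beta_1, \beta_2 < 0$, $p \ge 2$ an integer, and $\alpha_n \to \infty$. Let $x_n^* \in (0,1)$ be the unique solution of $\alpha_n\beta_1 + \alpha_n\beta_2 p x^{p-1} = \frac{1}{2}\log\frac{x}{1-x}$. Then $\lim_{n\to\infty} x_n^* / e^{2\alpha_n\beta_1} = 1$. -/

import Mathlib

open Real Filter Set

theorem stmt5 (β₁ β₂ : ℝ) (hβ₁ : β₁ < 0) (hβ₂ : β₂ < 0) (p : ℕ) (hp : 2 ≤ p)
    (α : ℕ → ℝ) (hα : Tendsto α atTop atTop)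
    (x : ℕ → ℝ) (hx : ∀ n, x n ∈ Set.Ioo (0 : ℝ) 1)
    (heq : ∀ n, α n * β₁ + α n * β₂ * p * x n ^ (p - 1)
        = (1 / 2) * Real.log (x n / (1 - x n))) :
    Tendsto (fun n => x n / Real.exp (2 * α n * β₁)) atTop (nhds 1) := by
  have hp0 : (0:ℝ) < p := by positivity
  -- key identity
  have hid : ∀ n, x n / Real.exp (2 * α n * β₁)
      = (1 - x n) * Real.exp (2 * α n * β₂ * p * x n ^ (p - 1)) := by
    intro n
    obtain ⟨hx0, hx1⟩ := hx n
    have h1 : (0:ℝ) < 1 - x n := by linarith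
    have hlog : Real.log (x n / (1 - x n))
        = 2 * α n * β₁ + 2 * α n * β₂ * p * x n ^ (p - 1) := by
      have := heq n; linarith
    have hxeq : x n / (1 - x n)
        = Real.exp (2 * α n * β₁) * Real.exp (2 * α n * β₂ * p * x n ^ (p - 1)) := by
      rw [← Real.exp_add, ← hlog, Real.exp_log (div_pos hx0 h1)]
    have hxe : x n = (1 - x n) * (Real.exp (2 * α n * β₁)
        * Real.exp (2 * α n * β₂ * p * x n ^ (p - 1))) := by
      field_simp at hxeq
      linarith [hxeq]
    conv_lhs => rw [hxe]
    field_simp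
  -- eventual bound x n ≤ exp (2 α n β₁)
  have hbound : ∀ᶠ n in atTop, x n ≤ Real.exp (2 * α n * β₁) := by
    filter_upwards [hα.eventually_ge_atTop 0] with n hn
    obtain ⟨hx0, hx1⟩ := hx n
    have h1 : (0:ℝ) < 1 - x n := by linarith
    have hexp : Real.exp (2 * α n * β₂ * p * x n ^ (p - 1)) ≤ 1 := by
      apply Real.exp_le_one_iff.mpr
      have : (0:ℝ) ≤ x n ^ (p - 1) := by positivity
      have h2 : 2 * α n * β₂ * p * x n ^ (p - 1) ≤ 0 := by
        apply mul_nonpos_of_nonpos_of_nonneg _ this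
        have : 2 * α n * β₂ ≤ 0 := by nlinarith
        nlinarith
      exact h2
    have := hid n
    have hle : x n / Real.exp (2 * α n * β₁) ≤ 1 := by
      rw [this]
      calc (1 - x n) * Real.exp (2 * α n * β₂ * p * x n ^ (p - 1))
          ≤ 1 * 1 := by
            apply mul_le_mul (by linarith) hexp (Real.exp_pos _).le one_pos.le
        _ = 1 := one_mul 1
    have hepos := Real.exp_pos (2 * α n * β₁)
    calc x n = (x n / Real.exp (2 * α n * β₁)) * Real.exp (2 * α n * β₁) := by
          field_simp
      _ ≤ 1 * Real.exp (2 * α n * β₁) := by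
          apply mul_le_mul_of_nonneg_right hle hepos.le
      _ = _ := one_mul _
  -- exp (2 α n β₁) → 0
  have htend_exp : Tendsto (fun n => Real.exp (2 * α n * β₁)) atTop (nhds 0) := by
    apply Real.tendsto_exp_atBot.comp
    have : Tendsto (fun n => (2 * β₁) * α n) atTop atBot :=
      hα.const_mul_atTop_of_neg (by linarith)
    exact this.congr (fun n => by ring)
  -- x → 0
  have hx0' : Tendsto x atTop (nhds 0) := by
    apply tendsto_of_tendsto_of_tendsto_of_le_of_le' tendsto_const_nhds htend_exp
    · exact Eventually.of_forall fun n => (hx n).1.le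
    · exact hbound
  -- α n * x n ^ (p-1) → 0
  have hk : (2 * β₁ * ((p:ℝ) - 1)) < 0 := by
    have : (1:ℝ) ≤ (p:ℝ) - 1 := by
      have : (2:ℝ) ≤ p := by exact_mod_cast hp
      linarith
    nlinarith
  set k : ℝ := -(2 * β₁ * ((p:ℝ) - 1)) with hkdef
  have hkpos : 0 < k := by simp [hkdef]; linarith
  have haux : Tendsto (fun n => α n * Real.exp ((2 * β₁ * ((p:ℝ) - 1)) * α n))
      atTop (nhds 0) := by
    have h1 : Tendsto (fun t : ℝ => t ^ 1 * Real.exp (-t)) atTop (nhds 0) :=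
      Real.tendsto_pow_mul_exp_neg_atTop_nhds_zero 1
    have h2 : Tendsto (fun n => k * α n) atTop atTop := hα.const_mul_atTop hkpos
    have h3 := (h1.comp h2).const_mul (1/k)
    rw [mul_zero] at h3
    apply h3.congr
    intro n
    simp only [Function.comp, pow_one]
    field_simp
    ring_nf
    rw [hkdef]; ring_nf
  have hαx : Tendsto (fun n => α n * x n ^ (p - 1)) atTop (nhds 0) := by
    apply tendsto_of_tendsto_of_tendsto_of_le_of_le' tendsto_const_nhds haux
    · filter_upwards [hα.eventually_ge_atTop 0] with n hn
      have h : (0:ℝ) ≤ x n ^ (p - 1) := pow_nonneg (hx n).1.le _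
      exact mul_nonneg hn h
    · filter_upwards [hα.eventually_ge_atTop 0, hbound] with n hn hb
      have hxpow : x n ^ (p - 1) ≤ Real.exp (2 * α n * β₁) ^ (p - 1) :=
        pow_le_pow_left₀ (hx n).1.le hb _
      have hcast : ((p - 1 : ℕ) : ℝ) = (p:ℝ) - 1 := by
        have : 1 ≤ p := by omega
        push_cast [this]; ring
      have hexp : Real.exp (2 * α n * β₁) ^ (p - 1)
          = Real.exp ((2 * β₁ * ((p:ℝ) - 1)) * α n) := by
        rw [← Real.exp_nat_mul, hcast]; ring_nf
      calc α n * x n ^ (p - 1) ≤ α n * Real.exp (2 * α n * β₁) ^ (p - 1) :=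
            mul_le_mul_of_nonneg_left hxpow hn
        _ = α n * Real.exp ((2 * β₁ * ((p:ℝ) - 1)) * α n) := by rw [hexp]
  -- conclude
  have h1 : Tendsto (fun n => 1 - x n) atTop (nhds 1) := by
    have := hx0'.const_sub 1
    simpa using this
  have h2 : Tendsto (fun n => Real.exp (2 * α n * β₂ * p * x n ^ (p - 1)))
      atTop (nhds 1) := by
    have harg : Tendsto (fun n => 2 * α n * β₂ * p * x n ^ (p - 1)) atTop (nhds 0) := by
      have := hαx.const_mul (2 * β₂ * p)
      rw [mul_zero] at this
      exact this.congr fun n => by ring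
    have := (Real.continuous_exp.tendsto 0).comp harg
    simpa [Function.comp_def] using this
  have := h1.mul h2
  rw [mul_one] at this
  exact (this.congr fun n => (hid n).symm)
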